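/- Let w be a weight (positive a.e. and locally integrable), let f be a measurable function, let 𝐏 be a collection of bitiles, and let 1 < p < ∞. Then the two quantities sup_T w(I_T)^{−1/p} ‖S_T f‖_{L^p(w)} and sup_T w(I_T)^{−1} ‖S_T f‖_{L^{1,∞}(w)}, where both suprema are over all 2-overlapping trees T ⊆ 𝐏, are comparable up to multiplicative constants depending only on p. -/

import Mathlib

open MeasureTheory Set
open scoped ENNReal NNReal Classical

noncomputable section
namespace Paper

/-- The Walsh functions `W_k`, supported on `[0,1)`. -/
def walsh (k : ℕ) (x : ℝ) : ℝ :=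
  if h : k = 0 then (if 0 ≤ x ∧ x < 1 then (1:ℝ) else 0)
  else walsh (k / 2) (2 * x) + (if k % 2 = 0 then (1:ℝ) else -1) * walsh (k / 2) (2 * x - 1)
termination_by k
decreasing_by all_goals exact Nat.div_lt_self (Nat.pos_of_ne_zero h) one_lt_two

/-- The dyadic interval `[2^j m, 2^j (m+1))`. -/
def dyadicI (j m : ℤ) : Set ℝ := Ico ((2:ℝ)^j * (m:ℝ)) ((2:ℝ)^j * ((m:ℝ)+1))

/-- A weight: positive a.e. and locally integrable. -/
def IsWeight (w : ℝ → ℝ) : Prop :=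
  (∀ᵐ x ∂(volume : Measure ℝ), 0 < w x) ∧ LocallyIntegrable w volume

/-- The measure `w(x) dx`. -/
def wMeasure (w : ℝ → ℝ) : Measure ℝ := volume.withDensity fun x => ENNReal.ofReal (w x)

/-- `[w]_{A_p} ≤ A` over dyadic intervals, for `1 < p`. -/
def ApBoundedBy (w : ℝ → ℝ) (p A : ℝ) : Prop :=
  ∀ j m : ℤ,
    ((2:ℝ)^(-j) * ∫ x in dyadicI j m, w x) *
      ((2:ℝ)^(-j) * ∫ x in dyadicI j m, w x ^ (-1/(p-1)))^(p-1) ≤ A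

/-- `[w]_{A_1} ≤ A` over dyadic intervals. -/
def A1BoundedBy (w : ℝ → ℝ) (A : ℝ) : Prop :=
  ∀ j m : ℤ,
    (2:ℝ)^(-j) * ∫ x in dyadicI j m, w x ≤ A * essInf w (volume.restrict (dyadicI j m))

/-- `w ∈ A_q` for `q ∈ [1,∞)`, covering also the case `q = 1`. -/
def MemAq (w : ℝ → ℝ) (q : ℝ) : Prop :=
  IsWeight w ∧ ((q = 1 ∧ ∃ A, A1BoundedBy w A) ∨ (1 < q ∧ ∃ A, ApBoundedBy w q A))

/-- `⟨f,g⟩ = ∫_0^1 f g`. -/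
def inner01 (f g : ℝ → ℝ) : ℝ := ∫ x in Ico (0:ℝ) 1, f x * g x

/-- Walsh--Fourier partial sums, `S_n f = 0` for `n < 0`. -/
def walshSum (f : ℝ → ℝ) (n : ℤ) (x : ℝ) : ℝ :=
  if n < 0 then 0
  else ∑ k ∈ Finset.range (n.toNat + 1), inner01 f (walsh k) * walsh k x

/-- Pointwise `r`-variation sup over all finite increasing integer sequences. -/
def varNormE (r : ℝ) (u : ℤ → ℝ) : ℝ≥0∞ :=
  ⨆ (M : ℕ) (N : Fin (M + 1) → ℤ) (_ : StrictMono N),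
    ENNReal.ofReal ((∑ j : Fin M, |u (N j.succ) - u (N j.castSucc)| ^ r) ^ (1 / r))

/-- A tile `[2^j m, 2^j (m+1)) × [2^{-j} n, 2^{-j}(n+1))`. -/
structure Tile where
  j : ℤ
  m : ℕ
  n : ℕ
deriving DecidableEq

namespace Tile
def timeI (p : Tile) : Set ℝ := Ico ((2:ℝ)^p.j * (p.m:ℝ)) ((2:ℝ)^p.j * ((p.m:ℝ)+1))
def freqI (p : Tile) : Set ℝ := Ico ((2:ℝ)^(-p.j) * (p.n:ℝ)) ((2:ℝ)^(-p.j) * ((p.n:ℝ)+1))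
def len (p : Tile) : ℝ := (2:ℝ)^p.j
def rect (p : Tile) : Set (ℝ × ℝ) := p.timeI ×ˢ p.freqI
/-- The order `p < q` on tiles: the tiles intersect and `I_p ⊆ I_q`. -/
def below (p q : Tile) : Prop := (p.rect ∩ q.rect).Nonempty ∧ p.timeI ⊆ q.timeI
/-- The Walsh packet of a tile. -/
def packet (p : Tile) (x : ℝ) : ℝ :=
  (2:ℝ) ^ (-(p.j:ℝ)/2) * walsh p.n ((2:ℝ)^(-p.j) * x - (p.m:ℝ))
end Tile

/-- A bitile `[2^j m, 2^j (m+1)) × [2^{1-j} n, 2^{1-j}(n+1))` (area 2). -/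
structure Bitile where
  j : ℤ
  m : ℕ
  n : ℕ
deriving DecidableEq

namespace Bitile
def timeI (P : Bitile) : Set ℝ := Ico ((2:ℝ)^P.j * (P.m:ℝ)) ((2:ℝ)^P.j * ((P.m:ℝ)+1))
def freqI (P : Bitile) : Set ℝ := Ico ((2:ℝ)^(1-P.j) * (P.n:ℝ)) ((2:ℝ)^(1-P.j) * ((P.n:ℝ)+1))
def len (P : Bitile) : ℝ := (2:ℝ)^P.j
def rect (P : Bitile) : Set (ℝ × ℝ) := P.timeI ×ˢ P.freqI
/-- The order `P < Q` on bitiles. -/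
def below (P Q : Bitile) : Prop := (P.rect ∩ Q.rect).Nonempty ∧ P.timeI ⊆ Q.timeI
/-- The lower tile `P_1`. -/
def lower (P : Bitile) : Tile := ⟨P.j, P.m, 2 * P.n⟩
/-- The upper tile `P_2`. -/
def upper (P : Bitile) : Tile := ⟨P.j, P.m, 2 * P.n + 1⟩
end Bitile

/-- A tree of bitiles with top `P_T`. -/
structure Tree where
  top : Bitile
  elems : Finset Bitile
  below_top : ∀ P ∈ elems, P.below top

/-- A tree is 2-overlapping if `P_2 < (P_T)_2` for all its members. -/
def Tree.TwoOverlapping (T : Tree) : Prop :=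
  ∀ P ∈ T.elems, (Bitile.upper P).below T.top.upper

/-- A tree is 1-overlapping if `P_1 < (P_T)_1` for all its members. -/
def Tree.OneOverlapping (T : Tree) : Prop :=
  ∀ P ∈ T.elems, (Bitile.lower P).below T.top.lower

/-- `⟨f, φ_p⟩`. -/
def pinner (f : ℝ → ℝ) (p : Tile) : ℝ := ∫ y, f y * p.packet y

/-- The tree square function `S_T f`. -/
def treeSq (f : ℝ → ℝ) (T : Tree) (x : ℝ) : ℝ :=
  Real.sqrt (∑ P ∈ T.elems,
    (pinner f P.lower)^2 * Set.indicator P.timeI (fun _ => (1:ℝ)) x / P.len)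

/-- The (weighted) size of a collection of bitiles: the least constant `C` with
`‖S_T f‖_{L²(w)} ≤ C w(I_T)^{1/2}` over all 2-overlapping trees in the collection,
realized as a supremum of ratios. -/
def size (w f : ℝ → ℝ) (Ps : Set Bitile) : ℝ≥0∞ :=
  ⨆ (T : Tree) (_ : (T.elems : Set Bitile) ⊆ Ps ∧ T.TwoOverlapping),
    eLpNorm (treeSq f T) 2 (wMeasure w) / (wMeasure w T.top.timeI) ^ (1/2 : ℝ)

/-- The coefficient `a_P(x)` built from linearizing data. -/
def coefP (M : ℝ → ℕ) (N : ℕ → ℝ → ℤ) (a : ℕ → ℝ → ℝ) (P : Bitile) (x : ℝ) : ℝ :=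
  ∑ j ∈ Finset.Icc 1 (M x),
    if ((N (j-1) x : ℝ)) ∉ P.freqI ∧ ((N j x : ℝ)) ∈ (Bitile.upper P).freqI then a j x else 0

/-- The (weighted) density of a collection of bitiles. -/
def density (w g : ℝ → ℝ) (r' : ℝ) (M : ℝ → ℕ) (N : ℕ → ℝ → ℤ) (a : ℕ → ℝ → ℝ)
    (Ps : Set Bitile) : ℝ≥0∞ :=
  ⨆ (P : Bitile) (_ : P ∈ Ps) (Q : Bitile) (_ : P.below Q),
    (ENNReal.ofReal (∫ x in Q.timeI,
        |g x| ^ r' * (∑ k ∈ Finset.Icc 1 (M x),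
          if ((N k x : ℝ)) ∈ Q.freqI then |a k x| ^ r' else 0) * w x)
      / wMeasure w Q.timeI) ^ (1/r')

/-- The bilinear form `B_Ps(f,g)`. -/
def bform (w f g : ℝ → ℝ) (M : ℝ → ℕ) (N : ℕ → ℝ → ℤ) (a : ℕ → ℝ → ℝ)
    (Ps : Finset Bitile) : ℝ :=
  ∑ P ∈ Ps, pinner f P.lower * ∫ x, P.lower.packet x * coefP M N a P x * g x * w x

/-- The linearized tree operator `C_T f`. -/
def treeOp (f : ℝ → ℝ) (M : ℝ → ℕ) (N : ℕ → ℝ → ℤ) (a : ℕ → ℝ → ℝ) (T : Tree) (x : ℝ) : ℝ :=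
  ∑ P ∈ T.elems, pinner f P.lower * P.lower.packet x * coefP M N a P x

/-- The Haar function of the dyadic interval `[2^j m, 2^j(m+1))`. -/
def haarFn (j m : ℤ) (x : ℝ) : ℝ :=
  if x ∈ Ico ((2:ℝ)^j * (m:ℝ)) ((2:ℝ)^j * ((m:ℝ) + 1/2)) then (2:ℝ) ^ (-(j:ℝ)/2)
  else if x ∈ Ico ((2:ℝ)^j * ((m:ℝ) + 1/2)) ((2:ℝ)^j * ((m:ℝ)+1)) then -(2:ℝ) ^ (-(j:ℝ)/2)
  else 0

/-- The martingale difference projection `Δ_j f` onto Haar functions at scale `2^{1-j}`. -/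
def haarProj (j : ℤ) (f : ℝ → ℝ) (x : ℝ) : ℝ :=
  ∑' m : ℤ, (∫ y, f y * haarFn (1-j) m y) * haarFn (1-j) m x

/-- The pointwise `r`-variation of the Haar martingale of `f`. -/
def varHaar (r : ℝ) (f : ℝ → ℝ) (x : ℝ) : ℝ≥0∞ :=
  ⨆ (M : ℕ) (N : Fin (M + 1) → ℤ) (_ : StrictMono N),
    ENNReal.ofReal ((∑ k : Fin M,
      |∑ j ∈ Finset.Ioc (N k.castSucc) (N k.succ), haarProj j f x| ^ r) ^ (1/r))

/-- The jump counting function `M_λ(x)`. -/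
def jumpCount (f : ℝ → ℝ) (lam : ℝ) (x : ℝ) : ℝ≥0∞ :=
  ⨆ (M : ℕ) (N : Fin (M + 1) → ℤ) (_ : StrictMono N),
    ((Finset.univ.filter (fun k : Fin M =>
      lam < |∑ j ∈ Finset.Ioc (N k.castSucc) (N k.succ), haarProj j f x|)).card : ℝ≥0∞)

/-- The square function of a finite collection of tiles. -/
def tileSq (f : ℝ → ℝ) (Ds : Finset Tile) (x : ℝ) : ℝ :=
  Real.sqrt (∑ p ∈ Ds, (pinner f p)^2 * Set.indicator p.timeI (fun _ => (1:ℝ)) x / p.len)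

/-- The dyadic sharp maximal function. -/
def sharpMax (g : ℝ → ℝ) (x : ℝ) : ℝ≥0∞ :=
  ⨆ (j : ℤ) (m : ℤ) (_ : x ∈ dyadicI j m),
    ⨅ c : ℝ, ENNReal.ofReal ((2:ℝ)^(-j) * ∫ y in dyadicI j m, |g y - c|)

/-- The dyadic `L²` maximal function `M_2`. -/
def M2fn (f : ℝ → ℝ) (x : ℝ) : ℝ≥0∞ :=
  ⨆ (j : ℤ) (m : ℤ) (_ : x ∈ dyadicI j m),
    ENNReal.ofReal (((2:ℝ)^(-j) * ∫ y in dyadicI j m, (f y)^2) ^ (1/2:ℝ))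

/-- The weak `L^{1,∞}(μ)` quasinorm. -/
def wkNorm (g : ℝ → ℝ) (μ : Measure ℝ) : ℝ≥0∞ :=
  ⨆ lam : ℝ, ENNReal.ofReal lam * μ {x | lam < |g x|}

lemma two_zpow_pos (j : ℤ) : (0:ℝ) < (2:ℝ)^j := zpow_pos (by norm_num) j

lemma dyadicI_nonempty (j m : ℤ) : (dyadicI j m).Nonempty := by
  refine ⟨(2:ℝ)^j * m, ?_, ?_⟩
  · exact le_refl _
  · have := two_zpow_pos j; nlinarith

lemma mem_dyadicI {j m : ℤ} {x : ℝ} :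
    x ∈ dyadicI j m ↔ ((m:ℝ) ≤ (2:ℝ)^(-j) * x ∧ (2:ℝ)^(-j) * x < (m:ℝ)+1) := by
  have h := two_zpow_pos j
  have h2 : (2:ℝ)^(-j) = ((2:ℝ)^j)⁻¹ := by rw [zpow_neg]
  constructor
  · rintro ⟨h1, h3⟩
    constructor
    · rw [h2, ← div_eq_inv_mul, le_div_iff₀ h]; linarith [h1]
    · rw [h2, ← div_eq_inv_mul, div_lt_iff₀ h]; linarith [h3]
  · rintro ⟨h1, h3⟩
    rw [h2, ← div_eq_inv_mul, le_div_iff₀ h] at h1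
    rw [h2, ← div_eq_inv_mul, div_lt_iff₀ h] at h3
    exact ⟨by linarith, by linarith⟩

lemma dyadicI_unique {j m m' : ℤ} {x : ℝ} (h : x ∈ dyadicI j m) (h' : x ∈ dyadicI j m') :
    m = m' := by
  rw [mem_dyadicI] at h h'
  have : m < m' + 1 := by exact_mod_cast lt_of_le_of_lt h.1 h'.2
  have : m' < m + 1 := by exact_mod_cast lt_of_le_of_lt h'.1 h.2
  omega

lemma dyadicI_subset {j j' m m' : ℤ} (hj : j ≤ j') {x : ℝ}
    (hx : x ∈ dyadicI j m) (hx' : x ∈ dyadicI j' m') : dyadicI j m ⊆ dyadicI j' m' := by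
  intro y hy
  rw [mem_dyadicI] at hx hx' hy ⊢
  have hpow : (2:ℝ)^(-j) = (2:ℝ)^(j'-j) * (2:ℝ)^(-j') := by
    rw [← zpow_add₀ (by norm_num : (2:ℝ) ≠ 0)]; ring_nf
  have hd : (0:ℝ) < (2:ℝ)^(j'-j) := two_zpow_pos _
  -- key : m' ≤ 2^{-j'} y < m'+1
  -- we know m ≤ 2^{-j} y < m+1, m ≤ 2^{-j} x < m+1, m' ≤ 2^{-j'} x < m'+1
  -- let c := 2^{j'-j} ∈ ℤ, c = 2^(j'-j) as real with j'-j ≥ 0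
  set k : ℕ := (j' - j).toNat with hk
  have hkr : (2:ℝ)^(j'-j) = (2^k : ℕ) := by
    rw [hk]; push_cast
    rw [← zpow_natCast (2:ℝ) (j'-j).toNat, Int.toNat_of_nonneg (by omega)]
  -- integer c
  have key : ∀ z : ℝ, (m:ℝ) ≤ (2:ℝ)^(-j) * z → (2:ℝ)^(-j) * z < (m:ℝ)+1 →
      (m':ℝ) ≤ (2:ℝ)^(-j') * z → True := fun _ _ _ _ => trivial
  -- Let u := 2^{-j'} x, v := 2^{-j'} y, c := 2^{j'-j}. Then c*u ∈ [m, m+1), c*v ∈ [m,m+1),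
  -- u ∈ [m', m'+1). Want v ∈ [m', m'+1).
  set c : ℝ := (2:ℝ)^(j'-j)
  set u : ℝ := (2:ℝ)^(-j') * x
  set v : ℝ := (2:ℝ)^(-j') * y
  have hcu : (m:ℝ) ≤ c * u ∧ c * u < m+1 := by
    constructor
    · have := hx.1; rw [hpow] at this; rw [mul_assoc] at this; exact this
    · have := hx.2; rw [hpow] at this; rw [mul_assoc] at this; exact this
  have hcv : (m:ℝ) ≤ c * v ∧ c * v < m+1 := by
    constructor
    · have := hy.1; rw [hpow] at this; rw [mul_assoc] at this; exact this
    · have := hy.2; rw [hpow] at this; rw [mul_assoc] at this; exact this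
  have hu : (m':ℝ) ≤ u ∧ u < m'+1 := hx'
  -- c is a positive integer
  have hcm : ∀ z : ℝ, c * z ∈ Ico (m:ℝ) ((m:ℝ)+1) → ⌊z⌋ = ⌊u⌋ → True := fun _ _ _ => trivial
  -- v ≥ m' : c*m' ≤ c*⌊...⌋... use floors: ⌊c*v⌋ = m = ⌊c*u⌋.
  -- c * (m':ℝ) is an integer cm'. From u ≥ m': c*u ≥ c*m', so m+1 > c*m'. hence m ≥ c*m' (ints),
  -- so c*v ≥ m ≥ c*m' ⇒ v ≥ m'.
  have hci : ((2^k * m' : ℤ) : ℝ) = c * m' := by rw [hkr]; push_cast; ring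
  have h1 : c * (m':ℝ) ≤ c * u := by
    have := hu.1; nlinarith [hd]
  have h2 : ((2^k * m' : ℤ):ℝ) < (m:ℝ) + 1 := by rw [hci]; exact lt_of_le_of_lt h1 hcu.2
  have h2' : (2^k * m' : ℤ) ≤ m := by exact_mod_cast Int.lt_add_one_iff.mp (by exact_mod_cast h2)
  have hv1 : (m':ℝ) ≤ v := by
    have : c * (m':ℝ) ≤ c * v := le_trans (by exact_mod_cast hci ▸ (by exact_mod_cast h2' : ((2^k * m' : ℤ):ℝ) ≤ (m:ℝ)).trans hcv.1) (le_refl _)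
    nlinarith [hd]
  -- other side: u < m'+1 ⇒ c*u < c*(m'+1), integer: m < c*(m'+1) ⇒ m+1 ≤ c(m'+1) ⇒ c*v < m+1 ≤ c(m'+1) ⇒ v < m'+1
  have hci2 : ((2^k * (m'+1) : ℤ) : ℝ) = c * ((m':ℝ)+1) := by rw [hkr]; push_cast; ring
  have h3 : (m:ℝ) < c * ((m':ℝ)+1) := by nlinarith [hcu.1, hu.2, hd]
  have h3' : m < 2^k * (m'+1) := by exact_mod_cast hci2 ▸ h3
  have h4 : (m:ℝ)+1 ≤ c * ((m':ℝ)+1) := by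
    have : m + 1 ≤ 2^k * (m'+1) := h3'
    calc (m:ℝ)+1 ≤ ((2^k * (m'+1) : ℤ):ℝ) := by exact_mod_cast this
    _ = c * ((m':ℝ)+1) := hci2
  have hv2 : v < (m':ℝ)+1 := by nlinarith [hcv.2, hd]
  exact ⟨hv1, hv2⟩

lemma dyadicI_scale_le {j j' m m' : ℤ} (h : dyadicI j m ⊆ dyadicI j' m') : j ≤ j' := by
  have h2 := (Ico_subset_Ico_iff (by have := two_zpow_pos j; nlinarith)).mp h
  have hlen : (2:ℝ)^j ≤ (2:ℝ)^j' := by nlinarith [h2.1, h2.2]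
  exact (zpow_le_zpow_iff_right₀ (by norm_num : (1:ℝ) < 2)).mp hlen

lemma dyadicI_same_scale {j m m' : ℤ} (h : dyadicI j m ⊆ dyadicI j m') : m = m' := by
  obtain ⟨x, hx⟩ := dyadicI_nonempty j m
  exact dyadicI_unique hx (h hx)

lemma dyadicI_subset_parent (j m : ℤ) : dyadicI j m ⊆ dyadicI (j+1) (m / 2) := by
  have h1 : 2 * (m / 2) ≤ m := by omega
  have h2 : m + 1 ≤ 2 * (m / 2) + 2 := by omega
  intro x hx
  rw [mem_dyadicI] at hx ⊢
  have hpow : (2:ℝ)^(-j) = 2 * (2:ℝ)^(-(j+1)) := by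
    have : -j = 1 + (-(j+1)) := by ring
    rw [this, zpow_add₀ (by norm_num : (2:ℝ) ≠ 0) 1 (-(j+1)), zpow_one]
  have h1' : ((2 * (m/2) : ℤ):ℝ) ≤ (m:ℝ) := by exact_mod_cast h1
  have h2' : ((m:ℝ)+1) ≤ ((2 * (m/2) + 2 : ℤ):ℝ) := by exact_mod_cast h2
  constructor
  · have := hx.1; rw [hpow] at this; push_cast at h1' ⊢; nlinarith
  · have := hx.2; rw [hpow] at this; push_cast at h2' ⊢; nlinarith

lemma dyadicI_parent_subset {j j' m m' : ℤ} (hj : j < j') {x : ℝ}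
    (hx : x ∈ dyadicI j m) (hx' : x ∈ dyadicI j' m') :
    dyadicI (j+1) (m / 2) ⊆ dyadicI j' m' :=
  dyadicI_subset (by omega) (dyadicI_subset_parent j m hx) hx'

lemma dyadicI_nonneg {j : ℤ} {m : ℤ} (hm : 0 ≤ m) {x : ℝ} (hx : x ∈ dyadicI j m) : 0 ≤ x := by
  have h1 := hx.1
  have hm' : (0:ℝ) ≤ (m:ℝ) := by exact_mod_cast hm
  nlinarith [two_zpow_pos j]

lemma dyadicI_idx_nonneg {j m : ℤ} (h : ∀ x ∈ dyadicI j m, 0 ≤ x) : 0 ≤ m := by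
  obtain ⟨x, hx⟩ := dyadicI_nonempty j m
  have hx0 := h x hx
  rw [mem_dyadicI] at hx
  have : (0:ℝ) < (m:ℝ) + 1 :=
    lt_of_le_of_lt (by positivity : (0:ℝ) ≤ (2:ℝ)^(-j) * x) hx.2
  exact_mod_cast by exact_mod_cast Int.lt_add_one_iff.mp (by exact_mod_cast this : (0:ℤ) < m + 1)

lemma left_mem_dyadicI (j m : ℤ) : (2:ℝ)^j * (m:ℝ) ∈ dyadicI j m := by
  constructor
  · exact le_refl _
  · have := two_zpow_pos j; nlinarith

lemma two_zpow_succ (j : ℤ) : (2:ℝ)^(1+j) = 2 * (2:ℝ)^j := by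
  rw [zpow_add₀ (by norm_num : (2:ℝ) ≠ 0) 1 j, zpow_one]

-- Tile / Bitile intervals as dyadic intervals
lemma Tile.timeI_eq (t : Tile) : t.timeI = dyadicI t.j (t.m : ℤ) := by
  simp [Tile.timeI, dyadicI]
lemma Tile.freqI_eq (t : Tile) : t.freqI = dyadicI (-t.j) (t.n : ℤ) := by
  simp [Tile.freqI, dyadicI]
lemma Bitile.timeI_eq (P : Bitile) : P.timeI = dyadicI P.j (P.m : ℤ) := by
  simp [Bitile.timeI, dyadicI]
lemma Bitile.lower_timeI (P : Bitile) : P.lower.timeI = P.timeI := rfl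
lemma Bitile.upper_timeI (P : Bitile) : P.upper.timeI = P.timeI := rfl
lemma Bitile.upper_freqI (P : Bitile) : P.upper.freqI = dyadicI (-P.j) (2 * P.n + 1 : ℤ) := by
  rw [Tile.freqI_eq]
  norm_num [Bitile.upper]
lemma Bitile.freqI_eq (P : Bitile) : P.freqI = dyadicI (1 - P.j) (P.n : ℤ) := by
  simp [Bitile.freqI, dyadicI]

lemma dyadicI_upper_half_subset (j n : ℤ) : dyadicI j (2*n+1) ⊆ dyadicI (1+j) n := by
  have h2 := two_zpow_succ j
  have hp := two_zpow_pos j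
  refine Ico_subset_Ico ?_ ?_
  · rw [h2]; push_cast; nlinarith
  · rw [h2]; push_cast; nlinarith

lemma Bitile.upper_freq_subset (P : Bitile) : P.upper.freqI ⊆ P.freqI := by
  rw [Bitile.upper_freqI, Bitile.freqI_eq]
  have h : (1 : ℤ) - P.j = 1 + (-P.j) := by ring
  rw [h]
  exact dyadicI_upper_half_subset (-P.j) (P.n : ℤ)

lemma measurableSet_dyadicI (j m : ℤ) : MeasurableSet (dyadicI j m) := measurableSet_Ico

lemma measurableSet_bitile_timeI (P : Bitile) : MeasurableSet P.timeI := by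
  rw [Bitile.timeI_eq]; exact measurableSet_dyadicI _ _

lemma wMeasure_apply (w : ℝ → ℝ) {s : Set ℝ} (hs : MeasurableSet s) :
    wMeasure w s = ∫⁻ x in s, ENNReal.ofReal (w x) ∂(volume : Measure ℝ) := by
  rw [wMeasure, withDensity_apply _ hs]

lemma wMeasure_Ico_lt_top {w : ℝ → ℝ} (hw : IsWeight w) (a b : ℝ) :
    wMeasure w (Ico a b) < ⊤ := by
  rw [wMeasure_apply w measurableSet_Ico]
  have hint : IntegrableOn w (Icc a b) volume :=
    hw.2.integrableOn_isCompact isCompact_Icc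
  calc ∫⁻ x in Ico a b, ENNReal.ofReal (w x) ∂volume
      ≤ ∫⁻ x in Icc a b, ENNReal.ofReal (w x) ∂volume :=
        lintegral_mono' (Measure.restrict_mono Ico_subset_Icc_self (le_refl _)) (le_refl _)
    _ < ⊤ := hint.lintegral_lt_top

lemma wMeasure_Ico_pos {w : ℝ → ℝ} (hw : IsWeight w) {a b : ℝ} (hab : a < b) :
    0 < wMeasure w (Ico a b) := by
  rw [pos_iff_ne_zero]
  intro h0
  rw [wMeasure_apply w measurableSet_Ico] at h0
  have hm : AEMeasurable (fun x => ENNReal.ofReal (w x)) (volume.restrict (Ico a b)) :=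
    (hw.2.aestronglyMeasurable.aemeasurable.ennreal_ofReal).restrict
  have hz := (lintegral_eq_zero_iff' hm).mp h0
  have hpos : ∀ᵐ x ∂(volume.restrict (Ico a b)), 0 < w x := ae_restrict_of_ae hw.1
  have hne : (volume.restrict (Ico a b)) ≠ 0 := by
    rw [← Measure.measure_univ_ne_zero, Measure.restrict_apply_univ]
    simp [Real.volume_Ico, hab, sub_pos.mpr hab]
  have : ∀ᵐ x ∂(volume.restrict (Ico a b)), False := by
    filter_upwards [hz, hpos] with x h1 h2
    simp only [Pi.zero_apply, ENNReal.ofReal_eq_zero] at h1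
    exact absurd h1 (not_le.mpr h2)
  obtain ⟨x, hx⟩ := (Filter.eventually_iff_exists_mem.mp this)
  · exact absurd this (by
      rw [Filter.eventually_false_iff_eq_bot]
      exact Filter.NeBot.ne (ae_neBot.mpr hne))

lemma wMeasure_dyadicI_lt_top {w : ℝ → ℝ} (hw : IsWeight w) (j m : ℤ) :
    wMeasure w (dyadicI j m) < ⊤ := wMeasure_Ico_lt_top hw _ _

lemma wMeasure_dyadicI_pos {w : ℝ → ℝ} (hw : IsWeight w) (j m : ℤ) :
    0 < wMeasure w (dyadicI j m) :=
  wMeasure_Ico_pos hw (by have := two_zpow_pos j; nlinarith)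

lemma treeSq_nonneg (f : ℝ → ℝ) (T : Tree) (x : ℝ) : 0 ≤ treeSq f T x :=
  Real.sqrt_nonneg _

lemma treeSq_term_nonneg (f : ℝ → ℝ) (P : Bitile) (x : ℝ) :
    0 ≤ (pinner f P.lower)^2 * Set.indicator P.timeI (fun _ => (1:ℝ)) x / P.len := by
  have h1 : (0:ℝ) ≤ Set.indicator P.timeI (fun _ => (1:ℝ)) x :=
    Set.indicator_nonneg (fun _ _ => zero_le_one) x
  have h2 : (0:ℝ) < P.len := two_zpow_pos P.j
  positivity

lemma treeSq_sq (f : ℝ → ℝ) (T : Tree) (x : ℝ) :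
    (treeSq f T x)^2 = ∑ P ∈ T.elems,
      (pinner f P.lower)^2 * Set.indicator P.timeI (fun _ => (1:ℝ)) x / P.len := by
  rw [treeSq, Real.sq_sqrt]
  exact Finset.sum_nonneg (fun P _ => treeSq_term_nonneg f P x)

lemma measurable_treeSq (f : ℝ → ℝ) (T : Tree) : Measurable (treeSq f T) := by
  apply Real.continuous_sqrt.measurable.comp
  apply Finset.measurable_sum
  intro P _
  exact ((measurable_const.indicator (measurableSet_bitile_timeI P)).const_mul _).div_const _

lemma treeSq_support {f : ℝ → ℝ} {T : Tree} {x : ℝ} (hx : x ∉ T.top.timeI) :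
    treeSq f T x = 0 := by
  rw [treeSq]
  have : ∀ P ∈ T.elems,
      (pinner f P.lower)^2 * Set.indicator P.timeI (fun _ => (1:ℝ)) x / P.len = 0 := by
    intro P hP
    have : x ∉ P.timeI := fun hxx => hx ((T.below_top P hP).2 hxx)
    simp [Set.indicator_of_notMem this]
  rw [Finset.sum_eq_zero this, Real.sqrt_zero]

lemma le_wkNorm (g : ℝ → ℝ) (μ : Measure ℝ) (lam : ℝ) :
    ENNReal.ofReal lam * μ {x | lam < |g x|} ≤ wkNorm g μ :=
  le_iSup (fun l => ENNReal.ofReal l * μ {x | l < |g x|}) lam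

lemma Tile.rect_nonempty (t : Tile) : t.rect.Nonempty := by
  apply Set.Nonempty.prod
  · rw [Tile.timeI_eq]; exact dyadicI_nonempty _ _
  · rw [Tile.freqI_eq]; exact dyadicI_nonempty _ _

lemma Bitile.rect_nonempty (P : Bitile) : P.rect.Nonempty := by
  apply Set.Nonempty.prod
  · rw [Bitile.timeI_eq]; exact dyadicI_nonempty _ _
  · rw [Bitile.freqI_eq]; exact dyadicI_nonempty _ _

lemma Tile.below_self (t : Tile) : t.below t :=
  ⟨by rw [Set.inter_self]; exact t.rect_nonempty, subset_rfl⟩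

lemma Bitile.below_self (P : Bitile) : P.below P :=
  ⟨by rw [Set.inter_self]; exact P.rect_nonempty, subset_rfl⟩

/-- The common frequency point of a 2-overlapping tree. -/
def treeXi (T : Tree) : ℝ := (2:ℝ)^(-T.top.j) * ((2 * T.top.n + 1 : ℤ) : ℝ)

lemma treeXi_nonneg (T : Tree) : 0 ≤ treeXi T := by
  have := two_zpow_pos (-T.top.j)
  have : ((2 * T.top.n + 1 : ℤ) : ℝ) > 0 := by positivity
  unfold treeXi
  positivity

lemma elems_scale_le {T : Tree} {P : Bitile} (hP : P ∈ T.elems) : P.j ≤ T.top.j := by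
  have h := (T.below_top P hP).2
  rw [Bitile.timeI_eq, Bitile.timeI_eq] at h
  exact dyadicI_scale_le h

lemma treeXi_mem {T : Tree} (hT : T.TwoOverlapping) {P : Bitile} (hP : P ∈ T.elems) :
    treeXi T ∈ dyadicI (-P.j) (2 * P.n + 1 : ℤ) := by
  obtain ⟨⟨pt, hpt⟩, hsub⟩ := hT P hP
  have hfr : pt.2 ∈ P.upper.freqI ∧ pt.2 ∈ T.top.upper.freqI := by
    obtain ⟨h1, h2⟩ := hpt
    exact ⟨h1.2, h2.2⟩
  rw [Bitile.upper_freqI] at hfr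
  have hscale : P.j ≤ T.top.j := elems_scale_le hP
  have hxi : treeXi T ∈ dyadicI (-T.top.j) (2 * T.top.n + 1 : ℤ) := by
    unfold treeXi; exact left_mem_dyadicI _ _
  rw [Bitile.upper_freqI] at hfr
  exact dyadicI_subset (by omega) hfr.2 hfr.1 hxi

lemma two_overlapping_unique {T : Tree} (hT : T.TwoOverlapping) {P P' : Bitile}
    (hP : P ∈ T.elems) (hP' : P' ∈ T.elems) (h : P.timeI = P'.timeI) : P = P' := by
  rw [Bitile.timeI_eq, Bitile.timeI_eq] at h
  have hj : P.j = P'.j := le_antisymm (dyadicI_scale_le h.le) (dyadicI_scale_le h.ge)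
  have hm : (P.m : ℤ) = (P'.m : ℤ) := by
    apply dyadicI_same_scale (j := P.j)
    rw [h, hj]
  have hn : (2 * P.n + 1 : ℤ) = (2 * P'.n + 1 : ℤ) := by
    have h1 := treeXi_mem hT hP
    have h2 := treeXi_mem hT hP'
    rw [← hj] at h2
    exact dyadicI_unique h1 h2
  have hm2 : P.m = P'.m := by exact_mod_cast hm
  have hn2 : P.n = P'.n := by omega
  obtain ⟨j1, m1, n1⟩ := P
  obtain ⟨j2, m2, n2⟩ := P'
  simp only [Bitile.mk.injEq]
  exact ⟨hj, hm2, hn2⟩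

/-- The weak-type hypothesis for all 2-overlapping subtrees of `Ps`. -/
def WkHyp (w f : ℝ → ℝ) (β : ℝ) (Ps : Set Bitile) : Prop :=
  ∀ T' : Tree, (T'.elems : Set Bitile) ⊆ Ps → T'.TwoOverlapping →
    wkNorm (treeSq f T') (wMeasure w) ≤ ENNReal.ofReal β * wMeasure w T'.top.timeI

lemma single_tile_bound {w f : ℝ → ℝ} {β : ℝ} (hw : IsWeight w) {Ps : Set Bitile}
    (Hβ : WkHyp w f β Ps) (hβ : 0 ≤ β) {P : Bitile} (hP : P ∈ Ps) :
    (pinner f P.lower)^2 / P.len ≤ β^2 := by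
  set Tp : Tree := ⟨P, {P}, by
    intro Q hQ
    rw [Finset.mem_singleton] at hQ
    subst hQ
    exact Bitile.below_self _⟩ with hTp
  have hover : Tp.TwoOverlapping := by
    intro Q hQ
    rw [hTp] at hQ
    simp only [Finset.mem_singleton] at hQ
    subst hQ
    exact Tile.below_self _
  have hsub : (Tp.elems : Set Bitile) ⊆ Ps := by
    intro Q hQ
    simp only [hTp, Finset.coe_singleton, Set.mem_singleton_iff] at hQ
    subst hQ
    exact hP
  have hwk := Hβ Tp hsub hover
  set c := pinner f P.lower
  set v := Real.sqrt (c^2 / P.len) with hv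
  have hlen : (0:ℝ) < P.len := two_zpow_pos P.j
  have hvsq : v^2 = c^2 / P.len := Real.sq_sqrt (by positivity)
  have hval : ∀ x ∈ P.timeI, treeSq f Tp x = v := by
    intro x hx
    rw [treeSq, hTp]
    simp only [Finset.sum_singleton, Set.indicator_of_mem hx]
    rw [hv]; norm_num; rfl
  have hμpos : 0 < wMeasure w P.timeI := by
    rw [Bitile.timeI_eq]; exact wMeasure_dyadicI_pos hw _ _
  have hμlt : wMeasure w P.timeI < ⊤ := by
    rw [Bitile.timeI_eq]; exact wMeasure_dyadicI_lt_top hw _ _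
  have hvβ : v ≤ β := by
    by_contra hc
    push_neg at hc
    set lam := (β + v) / 2 with hlam
    have h1 : β < lam := by rw [hlam]; linarith
    have h2 : lam < v := by rw [hlam]; linarith
    have hset : P.timeI ⊆ {x | lam < |treeSq f Tp x|} := by
      intro x hx
      have := hval x hx
      simp only [Set.mem_setOf_eq, this, abs_of_nonneg (Real.sqrt_nonneg _)]
      rwa [abs_of_nonneg (show (0:ℝ) ≤ v from Real.sqrt_nonneg _)]
    have hle : ENNReal.ofReal lam * wMeasure w P.timeI ≤
        ENNReal.ofReal β * wMeasure w P.timeI := by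
      calc ENNReal.ofReal lam * wMeasure w P.timeI
          ≤ ENNReal.ofReal lam * wMeasure w {x | lam < |treeSq f Tp x|} :=
            mul_le_mul_right (measure_mono hset) _
        _ ≤ wkNorm (treeSq f Tp) (wMeasure w) := le_wkNorm _ _ _
        _ ≤ ENNReal.ofReal β * wMeasure w Tp.top.timeI := hwk
        _ = ENNReal.ofReal β * wMeasure w P.timeI := rfl
    have := (ENNReal.mul_le_mul_iff_left (ne_of_gt hμpos) (ne_of_lt hμlt)).mp hle
    have := (ENNReal.ofReal_le_ofReal_iff (by linarith)).mp this
    linarith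
  calc c^2 / P.len = v^2 := hvsq.symm
    _ ≤ β^2 := by nlinarith [Real.sqrt_nonneg (c^2 / P.len)]

lemma treeSq_const_on {f : ℝ → ℝ} {T : Tree} {jm k : ℤ}
    (hjm : ∀ P ∈ T.elems, jm ≤ P.j) {x y : ℝ}
    (hx : x ∈ dyadicI jm k) (hy : y ∈ dyadicI jm k) : treeSq f T x = treeSq f T y := by
  unfold treeSq
  congr 1
  apply Finset.sum_congr rfl
  intro P hP
  have hind : Set.indicator P.timeI (fun _ => (1:ℝ)) x
      = Set.indicator P.timeI (fun _ => (1:ℝ)) y := by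
    have key : x ∈ P.timeI ↔ y ∈ P.timeI := by
      constructor
      · intro hxP
        have : dyadicI jm k ⊆ P.timeI := by
          rw [Bitile.timeI_eq] at hxP ⊢
          exact dyadicI_subset (hjm P hP) hx hxP
        exact this hy
      · intro hyP
        have : dyadicI jm k ⊆ P.timeI := by
          rw [Bitile.timeI_eq] at hyP ⊢
          exact dyadicI_subset (hjm P hP) hy hyP
        exact this hx
    by_cases hxP : x ∈ P.timeI
    · rw [Set.indicator_of_mem hxP, Set.indicator_of_mem (key.mp hxP)]
    · rw [Set.indicator_of_notMem hxP, Set.indicator_of_notMem (fun h => hxP (key.mpr h))]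
  rw [hind]

lemma E_subset_top {f : ℝ → ℝ} {T : Tree} {lam : ℝ} (hlam : 0 < lam) :
    {y | lam < treeSq f T y} ⊆ T.top.timeI := by
  intro x hx
  by_contra hc
  rw [Set.mem_setOf_eq, treeSq_support hc] at hx
  linarith

lemma exists_maximal_cover {f : ℝ → ℝ} {T : Tree} (hne : T.elems.Nonempty) {lam : ℝ}
    (hlam : 0 < lam) {x : ℝ} (hx : lam < treeSq f T x) :
    ∃ j m : ℤ, x ∈ dyadicI j m ∧ dyadicI j m ⊆ {y | lam < treeSq f T y} ∧
      ¬ (dyadicI (j+1) (m/2) ⊆ {y | lam < treeSq f T y}) := by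
  set E := {y | lam < treeSq f T y} with hE
  have hEsub : E ⊆ T.top.timeI := E_subset_top hlam
  have hEsub' : E ⊆ dyadicI T.top.j (T.top.m : ℤ) := by rw [← Bitile.timeI_eq]; exact hEsub
  set S : ℤ → Prop := fun j => j ≤ T.top.j ∧ ∃ k, x ∈ dyadicI j k ∧ dyadicI j k ⊆ E with hS
  have hbdd : ∃ b, ∀ z, S z → z ≤ b := ⟨T.top.j, fun z hz => hz.1⟩
  have hex : ∃ z, S z := by
    set jm := (T.elems.image Bitile.j).min' (hne.image _) with hjm
    obtain ⟨P0, hP0, hP0j⟩ := Finset.mem_image.mp ((T.elems.image Bitile.j).min'_mem (hne.image _))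
    have hjmle : ∀ P ∈ T.elems, jm ≤ P.j := fun P hP =>
      Finset.min'_le _ _ (Finset.mem_image_of_mem _ hP)
    refine ⟨jm, ?_, ⟨⌊(2:ℝ)^(-jm) * x⌋, ?_, ?_⟩⟩
    · rw [hjm, ← hP0j]; exact elems_scale_le hP0
    · rw [mem_dyadicI]
      exact ⟨Int.floor_le _, Int.lt_floor_add_one _⟩
    · intro y hy
      have hxmem : x ∈ dyadicI jm ⌊(2:ℝ)^(-jm) * x⌋ := by
        rw [mem_dyadicI]; exact ⟨Int.floor_le _, Int.lt_floor_add_one _⟩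
      rw [hE, Set.mem_setOf_eq, ← treeSq_const_on hjmle hxmem hy]
      exact hx
  obtain ⟨j, ⟨hjle, k, hxk, hkE⟩, hgreat⟩ := Int.exists_greatest_of_bdd hbdd hex
  refine ⟨j, k, hxk, hkE, ?_⟩
  intro hpar
  have hxpar : x ∈ dyadicI (j+1) (k/2) := dyadicI_subset_parent j k hxk
  rcases lt_or_eq_of_le hjle with hlt | heq
  · have : S (j+1) := ⟨by omega, ⟨k/2, hxpar, hpar⟩⟩
    have := hgreat _ this
    omega
  · have : dyadicI (j+1) (k/2) ⊆ dyadicI T.top.j (T.top.m : ℤ) := fun y hy => hEsub' (hpar hy)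
    have := dyadicI_scale_le this
    omega

lemma maximal_disjoint {E : Set ℝ} {j m j' m' : ℤ}
    (h1 : dyadicI j m ⊆ E) (h2 : ¬ (dyadicI (j+1) (m/2) ⊆ E))
    (h1' : dyadicI j' m' ⊆ E) (h2' : ¬ (dyadicI (j'+1) (m'/2) ⊆ E))
    (hint : (dyadicI j m ∩ dyadicI j' m').Nonempty) : j = j' ∧ m = m' := by
  obtain ⟨x, hx1, hx2⟩ := hint
  have key : ∀ {a b a' b' : ℤ}, a < a' → x ∈ dyadicI a b → x ∈ dyadicI a' b' →
      dyadicI a' b' ⊆ E → ¬ (dyadicI (a+1) (b/2) ⊆ E) → False := by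
    intro a b a' b' hab hxa hxa' hsub hnpar
    exact hnpar (fun y hy => hsub (dyadicI_parent_subset hab hxa hxa' hy))
  rcases lt_trichotomy j j' with h | h | h
  · exact absurd (key h hx1 hx2 h1' h2) id
  · exact ⟨h, by subst h; exact dyadicI_unique hx1 hx2⟩
  · exact absurd (key h hx2 hx1 h1 h2') id

lemma local_tree {T : Tree} (hT : T.TwoOverlapping) {j m : ℤ} (hm0 : 0 ≤ m) :
    ∃ T' : Tree, T'.elems = T.elems.filter (fun P => P.timeI ⊆ dyadicI j m ∧ P.j < j) ∧
      T'.top.timeI = dyadicI j m ∧ T'.TwoOverlapping := by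
  set ξ := treeXi T with hξdef
  have hξ0 : 0 ≤ ξ := treeXi_nonneg T
  set b0 : ℤ := ⌊(2:ℝ)^(j-1) * ξ⌋ with hb0def
  have hb0 : 0 ≤ b0 := Int.floor_nonneg.mpr (by positivity)
  have hξmem : ξ ∈ dyadicI (1-j) b0 := by
    rw [mem_dyadicI]
    have : -(1-j) = j - 1 := by ring
    rw [this]
    exact ⟨Int.floor_le _, Int.lt_floor_add_one _⟩
  set Q : Bitile := ⟨j, m.toNat, b0.toNat⟩ with hQdef
  have hQt : Q.timeI = dyadicI j m := by
    rw [Bitile.timeI_eq]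
    congr 1
    simp [hQdef, Int.toNat_of_nonneg hm0]
  have hQuf : Q.upper.freqI = dyadicI (-j) (2*b0+1) := by
    rw [Bitile.upper_freqI]
    congr 1
    simp [hQdef, Int.toNat_of_nonneg hb0]
  have hQut : Q.upper.timeI = dyadicI j m := by rw [Bitile.upper_timeI]; exact hQt
  have hQf : Q.freqI = dyadicI (1-j) b0 := by
    rw [Bitile.freqI_eq]
    simp [hQdef, Int.toNat_of_nonneg hb0]
  have hQufsub : Q.upper.freqI ⊆ dyadicI (1-j) b0 := by
    rw [hQuf]
    have h : (1:ℤ) - j = 1 + (-j) := by ring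
    rw [h]
    exact dyadicI_upper_half_subset (-j) b0
  set elems' := T.elems.filter (fun P => P.timeI ⊆ dyadicI j m ∧ P.j < j) with helems
  have hfreq : ∀ P ∈ elems', dyadicI (1-j) b0 ⊆ P.upper.freqI := by
    intro P hP
    rw [Finset.mem_filter] at hP
    have hξP := treeXi_mem hT hP.1
    rw [Bitile.upper_freqI]
    exact dyadicI_subset (by omega) hξmem hξP
  -- common point of rectangles
  have hpt : ∀ P ∈ elems', ∃ t η : ℝ, t ∈ P.timeI ∧ t ∈ dyadicI j m ∧
      η ∈ P.upper.freqI ∧ η ∈ Q.upper.freqI := by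
    intro P hP
    rw [Finset.mem_filter] at hP
    obtain ⟨t, ht⟩ : P.timeI.Nonempty := by rw [Bitile.timeI_eq]; exact dyadicI_nonempty _ _
    obtain ⟨η, hη⟩ : Q.upper.freqI.Nonempty := by rw [hQuf]; exact dyadicI_nonempty _ _
    exact ⟨t, η, ht, hP.2.1 ht, hfreq P (Finset.mem_filter.mpr hP) (hQufsub hη), hη⟩
  have hbelow : ∀ P ∈ elems', P.below Q := by
    intro P hP
    obtain ⟨t, η, ht, htm, hη, hηQ⟩ := hpt P hP
    have hP' := Finset.mem_filter.mp hP
    constructor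
    · refine ⟨(t, η), ?_, ?_⟩
      · exact Set.mem_prod.mpr ⟨ht, (Bitile.upper_freq_subset P) hη⟩
      · exact Set.mem_prod.mpr ⟨by rw [hQt]; exact htm, (Bitile.upper_freq_subset Q) hηQ⟩
    · rw [hQt]; exact hP'.2.1
  refine ⟨⟨Q, elems', hbelow⟩, rfl, hQt, ?_⟩
  intro P hP
  obtain ⟨t, η, ht, htm, hη, hηQ⟩ := hpt P hP
  have hP' := Finset.mem_filter.mp hP
  constructor
  · refine ⟨(t, η), ?_, ?_⟩
    · exact Set.mem_prod.mpr ⟨by rw [Bitile.upper_timeI]; exact ht, hη⟩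
    · exact Set.mem_prod.mpr ⟨by rw [hQut]; exact htm, hηQ⟩
  · rw [Bitile.upper_timeI, Bitile.upper_timeI, hQt]
    exact hP'.2.1

lemma local_halving {w f : ℝ → ℝ} (hw : IsWeight w) {β : ℝ} {Ps : Set Bitile}
    (Hβ : WkHyp w f β Ps) (hβ : 0 < β) {T : Tree} (hTsub : (T.elems : Set Bitile) ⊆ Ps)
    (hT : T.TwoOverlapping) {lam : ℝ} (hlam : 0 < lam) {j m : ℤ}
    (hJE : dyadicI j m ⊆ {y | lam < treeSq f T y})
    (hpar : ¬ (dyadicI (j+1) (m/2) ⊆ {y | lam < treeSq f T y})) :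
    wMeasure w ({y | lam + 3*β < treeSq f T y} ∩ dyadicI j m) ≤
      wMeasure w (dyadicI j m) / 2 := by
  set g := treeSq f T with hg
  have hm0 : 0 ≤ m := by
    apply dyadicI_idx_nonneg (j := j)
    intro x hx
    have hx1 : x ∈ T.top.timeI := E_subset_top hlam (hJE hx)
    rw [Bitile.timeI_eq] at hx1
    exact dyadicI_nonneg (by positivity) hx1
  obtain ⟨y, hy, hyE⟩ : ∃ y ∈ dyadicI (j+1) (m/2), ¬ (lam < g y) := by
    by_contra hc
    push_neg at hc
    exact hpar (fun z hz => hc z hz)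
  have hgy : g y ≤ lam := not_lt.mp hyE
  obtain ⟨T', hT'e, hT't, hT'o⟩ := local_tree hT hm0 (j := j)
  have hT'sub : (T'.elems : Set Bitile) ⊆ Ps := by
    rw [hT'e]
    intro P hP
    simp only [Finset.coe_filter, Set.mem_setOf_eq] at hP
    exact hTsub hP.1
  have hptwise : ∀ x ∈ dyadicI j m, (g x)^2 ≤ lam^2 + β^2 + (treeSq f T' x)^2 := by
    intro x hx
    set t : Bitile → ℝ := fun P =>
      (pinner f P.lower)^2 * Set.indicator P.timeI (fun _ => (1:ℝ)) x / P.len with ht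
    have htn : ∀ P, 0 ≤ t P := fun P => treeSq_term_nonneg f P x
    set ty : Bitile → ℝ := fun P =>
      (pinner f P.lower)^2 * Set.indicator P.timeI (fun _ => (1:ℝ)) y / P.len with hty
    have htyn : ∀ P, 0 ≤ ty P := fun P => treeSq_term_nonneg f P y
    set p1 : Bitile → Prop := fun P => P.timeI ⊆ dyadicI j m with hp1
    set p2 : Bitile → Prop := fun P => P.j < j with hp2
    have hsq : (g x)^2 = ∑ P ∈ T.elems, t P := treeSq_sq f T x
    have hsplit1 : ∑ P ∈ T.elems, t P =
        ∑ P ∈ T.elems.filter p1, t P + ∑ P ∈ T.elems.filter (fun P => ¬ p1 P), t P :=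
      (Finset.sum_filter_add_sum_filter_not _ _ _).symm
    have hsplit2 : ∑ P ∈ T.elems.filter p1, t P =
        ∑ P ∈ (T.elems.filter p1).filter p2, t P +
        ∑ P ∈ (T.elems.filter p1).filter (fun P => ¬ p2 P), t P :=
      (Finset.sum_filter_add_sum_filter_not _ _ _).symm
    have hff : (T.elems.filter p1).filter p2 = T'.elems := by
      rw [hT'e, Finset.filter_filter]
    have hnl : ∑ P ∈ T.elems.filter (fun P => ¬ p1 P), t P ≤ lam^2 := by
      have hle : ∀ P ∈ T.elems.filter (fun P => ¬ p1 P), t P ≤ ty P := by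
        intro P hP
        rw [Finset.mem_filter] at hP
        by_cases hxP : x ∈ P.timeI
        · have hxP' : x ∈ dyadicI P.j (P.m : ℤ) := by rw [← Bitile.timeI_eq]; exact hxP
          have hjP : j < P.j := by
            by_contra hc
            push_neg at hc
            apply hP.2
            show P.timeI ⊆ dyadicI j m
            rw [Bitile.timeI_eq]
            exact dyadicI_subset hc hxP' hx
          have hyP : y ∈ P.timeI := by
            rw [Bitile.timeI_eq]
            exact dyadicI_parent_subset hjP hx hxP' hy
          rw [ht, hty]
          simp only [Set.indicator_of_mem hxP, Set.indicator_of_mem hyP]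
          exact le_refl _
        · rw [ht]
          simp only [Set.indicator_of_notMem hxP]
          simp only [mul_zero, zero_div]
          exact htyn P
      calc ∑ P ∈ T.elems.filter (fun P => ¬ p1 P), t P
          ≤ ∑ P ∈ T.elems.filter (fun P => ¬ p1 P), ty P := Finset.sum_le_sum hle
        _ ≤ ∑ P ∈ T.elems, ty P :=
            Finset.sum_le_sum_of_subset_of_nonneg (Finset.filter_subset _ _)
              (fun P _ _ => htyn P)
        _ = (g y)^2 := (treeSq_sq f T y).symm
        _ ≤ lam^2 := by nlinarith [treeSq_nonneg f T y]
    have hsc : ∑ P ∈ (T.elems.filter p1).filter (fun P => ¬ p2 P), t P ≤ β^2 := by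
      set s := (T.elems.filter p1).filter (fun P => ¬ p2 P) with hs
      have hmem : ∀ P ∈ s, P ∈ T.elems ∧ P.timeI = dyadicI j m := by
        intro P hP
        rw [hs, Finset.filter_filter, Finset.mem_filter] at hP
        obtain ⟨hPe, hPsub, hPj⟩ := hP
        rw [hp1, Bitile.timeI_eq] at hPsub
        have hPj' : P.j = j := by
          have := dyadicI_scale_le hPsub
          rw [hp2] at hPj
          omega
        refine ⟨hPe, ?_⟩
        rw [Bitile.timeI_eq, hPj']
        have hPsub' : dyadicI P.j (P.m : ℤ) ⊆ dyadicI P.j m := by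
          rw [hPj']
          rw [hPj'] at hPsub
          exact hPsub
        rw [dyadicI_same_scale hPsub']
      rcases Finset.eq_empty_or_nonempty s with hse | ⟨P1, hP1⟩
      · rw [hse, Finset.sum_empty]; positivity
      · have huniq : ∀ P ∈ s, P = P1 := fun P hP =>
          two_overlapping_unique hT (hmem P hP).1 (hmem P1 hP1).1
            (by rw [(hmem P hP).2, (hmem P1 hP1).2])
        have hsum : ∑ P ∈ s, t P = t P1 :=
          Finset.sum_eq_single_of_mem P1 hP1 (fun b hb hne => absurd (huniq b hb) hne)
        rw [hsum, ht]
        have hind : Set.indicator P1.timeI (fun _ => (1:ℝ)) x ≤ 1 := by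
          by_cases hmx : x ∈ P1.timeI <;> simp [hmx]
        have hind0 : 0 ≤ Set.indicator P1.timeI (fun _ => (1:ℝ)) x :=
          Set.indicator_nonneg (fun _ _ => zero_le_one) x
        have hlen : (0:ℝ) < P1.len := two_zpow_pos P1.j
        have hstb := single_tile_bound hw Hβ hβ.le (hTsub (Finset.mem_coe.mpr (hmem P1 hP1).1))
        calc (pinner f P1.lower)^2 * Set.indicator P1.timeI (fun _ => (1:ℝ)) x / P1.len
            ≤ (pinner f P1.lower)^2 * 1 / P1.len := by
              simp only [div_eq_mul_inv]
              exact mul_le_mul_of_nonneg_right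
                (mul_le_mul_of_nonneg_left hind (sq_nonneg _)) (inv_pos.mpr hlen).le
          _ = (pinner f P1.lower)^2 / P1.len := by ring
          _ ≤ β^2 := hstb
    have hT'x : ∑ P ∈ T'.elems, t P = (treeSq f T' x)^2 := (treeSq_sq f T' x).symm
    rw [hsq, hsplit1, hsplit2, hff, hT'x]
    linarith
  -- inclusion into the level set of the local tree
  have hincl : {z | lam + 3*β < g z} ∩ dyadicI j m ⊆ {z | 2*β < |treeSq f T' z|} := by
    rintro x ⟨hx1, hx2⟩
    have h1 : lam + 3*β < g x := hx1
    have h2 := hptwise x hx2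
    have hS0 : 0 ≤ treeSq f T' x := treeSq_nonneg _ _ _
    have hg0 : 0 ≤ g x := treeSq_nonneg _ _ _
    have hgoal : 2*β < treeSq f T' x := by
      by_contra hc
      push_neg at hc
      have e1 : (lam+3*β)^2 < (g x)^2 := by
        nlinarith [mul_pos (sub_pos.mpr h1) (by linarith : (0:ℝ) < g x + (lam+3*β))]
      have e2 : (treeSq f T' x)^2 ≤ (2*β)^2 := by
        nlinarith [mul_nonneg (sub_nonneg.mpr hc) (by linarith : (0:ℝ) ≤ treeSq f T' x + 2*β)]
      nlinarith [mul_pos hlam hβ]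
    rw [Set.mem_setOf_eq, abs_of_nonneg hS0]
    exact hgoal
  -- weak-type bound for the local tree
  have hwk := Hβ T' hT'sub hT'o
  rw [hT't] at hwk
  have hchain : ENNReal.ofReal (2*β) * wMeasure w {z | 2*β < |treeSq f T' z|} ≤
      ENNReal.ofReal β * wMeasure w (dyadicI j m) :=
    le_trans (le_wkNorm _ _ _) hwk
  have h2β : ENNReal.ofReal (2*β) = 2 * ENNReal.ofReal β := by
    rw [ENNReal.ofReal_mul (by norm_num : (0:ℝ) ≤ 2)]
    norm_num
  rw [h2β] at hchain
  have hβ0 : ENNReal.ofReal β ≠ 0 := by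
    simp only [ne_eq, ENNReal.ofReal_eq_zero, not_le]
    exact hβ
  have hcc : 2 * wMeasure w {z | 2*β < |treeSq f T' z|} ≤ wMeasure w (dyadicI j m) := by
    have : ENNReal.ofReal β * (2 * wMeasure w {z | 2*β < |treeSq f T' z|}) ≤
        ENNReal.ofReal β * wMeasure w (dyadicI j m) := by
      calc ENNReal.ofReal β * (2 * wMeasure w {z | 2*β < |treeSq f T' z|})
          = 2 * ENNReal.ofReal β * wMeasure w {z | 2*β < |treeSq f T' z|} := by ring
        _ ≤ ENNReal.ofReal β * wMeasure w (dyadicI j m) := hchain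
    exact (ENNReal.mul_le_mul_iff_right hβ0 ENNReal.ofReal_ne_top).mp this
  calc wMeasure w ({z | lam + 3*β < g z} ∩ dyadicI j m)
      ≤ wMeasure w {z | 2*β < |treeSq f T' z|} := measure_mono hincl
    _ ≤ wMeasure w (dyadicI j m) / 2 := by
        rw [ENNReal.le_div_iff_mul_le (Or.inl (by norm_num)) (Or.inl (by norm_num))]
        rw [mul_comm]
        exact hcc

lemma global_halving {w f : ℝ → ℝ} (hw : IsWeight w) {β : ℝ} {Ps : Set Bitile}
    (Hβ : WkHyp w f β Ps) (hβ : 0 < β) {T : Tree} (hTsub : (T.elems : Set Bitile) ⊆ Ps)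
    (hT : T.TwoOverlapping) (hne : T.elems.Nonempty) {lam : ℝ} (hlam : 0 < lam) :
    wMeasure w {y | lam + 3*β < treeSq f T y} ≤ wMeasure w {y | lam < treeSq f T y} / 2 := by
  set g := treeSq f T with hg
  set E := {y | lam < g y} with hE
  set E' := {y | lam + 3*β < g y} with hE'
  have hE'E : E' ⊆ E := fun y hy => by
    rw [hE', Set.mem_setOf_eq] at hy
    rw [hE, Set.mem_setOf_eq]
    linarith
  set 𝒥 : Set (ℤ × ℤ) := {q | dyadicI q.1 q.2 ⊆ E ∧ ¬ (dyadicI (q.1+1) (q.2/2) ⊆ E)} with h𝒥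
  have hcount : 𝒥.Countable := Set.to_countable _
  have hdisj : 𝒥.PairwiseDisjoint (fun q => dyadicI q.1 q.2) := by
    intro a ha b hb hne'
    rw [Set.mem_setOf_eq] at ha hb
    rw [Function.onFun, Set.disjoint_iff_inter_eq_empty]
    by_contra hcone
    have hint : (dyadicI a.1 a.2 ∩ dyadicI b.1 b.2).Nonempty :=
      Set.nonempty_iff_ne_empty.mpr hcone
    obtain ⟨h1, h2⟩ := maximal_disjoint ha.1 ha.2 hb.1 hb.2 hint
    exact hne' (Prod.ext h1 h2)
  have hcover : E = ⋃ q ∈ 𝒥, dyadicI q.1 q.2 := by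
    apply Set.Subset.antisymm
    · intro x hx
      obtain ⟨j, m, hxm, hsub, hnpar⟩ := exists_maximal_cover hne hlam hx
      exact Set.mem_biUnion (show ((j,m) : ℤ×ℤ) ∈ 𝒥 from ⟨hsub, hnpar⟩) hxm
    · intro x hx
      obtain ⟨q, hq, hxq⟩ := Set.mem_iUnion₂.mp hx
      exact hq.1 hxq
  have hmeasJ : ∀ q ∈ 𝒥, MeasurableSet (dyadicI q.1 q.2) := fun q _ => measurableSet_dyadicI _ _
  have hmeasE' : MeasurableSet E' := by
    rw [hE']
    exact measurableSet_lt measurable_const (measurable_treeSq f T)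
  have hE'union : E' = ⋃ q ∈ 𝒥, (E' ∩ dyadicI q.1 q.2) := by
    rw [← Set.inter_iUnion₂, ← hcover]
    exact (Set.inter_eq_left.mpr hE'E).symm
  have hdisj' : 𝒥.PairwiseDisjoint (fun q : ℤ×ℤ => E' ∩ dyadicI q.1 q.2) :=
    hdisj.mono (fun q => Set.inter_subset_right)
  calc wMeasure w E' = wMeasure w (⋃ q ∈ 𝒥, (E' ∩ dyadicI q.1 q.2)) := by rw [← hE'union]
    _ = ∑' q : 𝒥, wMeasure w (E' ∩ dyadicI (q:ℤ×ℤ).1 (q:ℤ×ℤ).2) :=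
        measure_biUnion hcount hdisj'
          (fun q hq => hmeasE'.inter (measurableSet_dyadicI _ _))
    _ ≤ ∑' q : 𝒥, wMeasure w (dyadicI (q:ℤ×ℤ).1 (q:ℤ×ℤ).2) / 2 := by
        apply ENNReal.tsum_le_tsum
        intro q
        obtain ⟨hq1, hq2⟩ := q.2
        exact local_halving hw Hβ hβ hTsub hT hlam hq1 hq2
    _ = (∑' q : 𝒥, wMeasure w (dyadicI (q:ℤ×ℤ).1 (q:ℤ×ℤ).2)) / 2 := by
        simp only [div_eq_mul_inv]
        exact ENNReal.tsum_mul_right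
    _ = wMeasure w E / 2 := by
        congr 1
        rw [hcover]
        exact (measure_biUnion hcount hdisj hmeasJ).symm

lemma iter_bound {w f : ℝ → ℝ} (hw : IsWeight w) {β : ℝ} {Ps : Set Bitile}
    (Hβ : WkHyp w f β Ps) (hβ : 0 < β) {T : Tree} (hTsub : (T.elems : Set Bitile) ⊆ Ps)
    (hT : T.TwoOverlapping) (k : ℕ) :
    wMeasure w {y | 3*β*(k+1) < treeSq f T y} ≤
      wMeasure w T.top.timeI * (2⁻¹ : ℝ≥0∞)^k := by
  rcases Finset.eq_empty_or_nonempty T.elems with he | hne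
  · have : {y | 3*β*(k+1) < treeSq f T y} = ∅ := by
      apply Set.eq_empty_iff_forall_notMem.mpr
      intro y hy
      rw [Set.mem_setOf_eq, treeSq, he, Finset.sum_empty, Real.sqrt_zero] at hy
      nlinarith [hy]
    rw [this]
    simp
  induction k with
  | zero =>
    have hsub : {y | 3*β*((0:ℕ)+1) < treeSq f T y} ⊆ T.top.timeI := by
      apply E_subset_top
      push_cast
      nlinarith
    calc wMeasure w {y | 3*β*((0:ℕ)+1) < treeSq f T y} ≤ wMeasure w T.top.timeI :=
          measure_mono hsub
      _ = wMeasure w T.top.timeI * (2⁻¹ : ℝ≥0∞)^(0:ℕ) := by simp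
  | succ k ih =>
    have hset : {y | 3*β*((k+1:ℕ)+1) < treeSq f T y} =
        {y | (3*β*(k+1)) + 3*β < treeSq f T y} := by
      congr 1
      ext y
      constructor <;> intro hy <;> (push_cast at hy ⊢; nlinarith)
    rw [hset]
    have hlam : (0:ℝ) < 3*β*(k+1) := by positivity
    calc wMeasure w {y | (3*β*(k+1)) + 3*β < treeSq f T y}
        ≤ wMeasure w {y | 3*β*(k+1) < treeSq f T y} / 2 :=
          global_halving hw Hβ hβ hTsub hT hne hlam
      _ ≤ (wMeasure w T.top.timeI * (2⁻¹ : ℝ≥0∞)^k) / 2 := by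
          exact ENNReal.div_le_div_right ih 2
      _ = wMeasure w T.top.timeI * (2⁻¹ : ℝ≥0∞)^(k+1) := by
          rw [div_eq_mul_inv, pow_succ, mul_assoc]

lemma summable_rpow_geom (p : ℝ) : Summable (fun k : ℕ => ((k:ℝ)+1)^p * (2⁻¹:ℝ)^k) := by
  set n := ⌈p⌉₊ with hn
  have hge : Summable (fun k : ℕ => (2⁻¹:ℝ)^k) :=
    summable_geometric_of_lt_one (by norm_num) (by norm_num)
  have hsum : Summable (fun k : ℕ =>
      (2:ℝ)^n * ((k:ℝ)^n * (2⁻¹:ℝ)^k) + (2:ℝ)^n * (2⁻¹:ℝ)^k) := by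
    apply Summable.add
    · exact (summable_pow_mul_geometric_of_norm_lt_one (R := ℝ) n
        (by rw [Real.norm_eq_abs]; rw [abs_of_nonneg]; norm_num; norm_num)).mul_left _
    · exact hge.mul_left _
  apply Summable.of_nonneg_of_le (fun k => by positivity) _ hsum
  intro k
  have hk0 : (0:ℝ) ≤ (k:ℝ) := Nat.cast_nonneg k
  have h1 : ((k:ℝ)+1)^p ≤ ((k:ℝ)+1)^(n:ℝ) :=
    Real.rpow_le_rpow_of_exponent_le (by linarith) (Nat.le_ceil p)
  have h2 : ((k:ℝ)+1)^(n:ℝ) = ((k:ℝ)+1)^n := Real.rpow_natCast _ n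
  have h3 : ((k:ℝ)+1)^n ≤ (2:ℝ)^n * ((k:ℝ)^n + 1) := by
    rcases Nat.eq_zero_or_pos k with hk | hk
    · subst hk
      have e1 : (1:ℝ) ≤ 2^n := one_le_pow₀ (by norm_num)
      simp only [Nat.cast_zero, zero_add, one_pow]
      have e2 : (0:ℝ) ≤ (0:ℝ)^n := by positivity
      nlinarith [mul_nonneg (by positivity : (0:ℝ) ≤ (2:ℝ)^n) e2]
    · have hk1 : (1:ℝ) ≤ (k:ℝ) := by exact_mod_cast hk
      calc ((k:ℝ)+1)^n ≤ (2*(k:ℝ))^n := by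
            apply pow_le_pow_left₀ (by linarith) (by linarith)
        _ = 2^n * (k:ℝ)^n := mul_pow 2 _ n
        _ ≤ (2:ℝ)^n * ((k:ℝ)^n + 1) := by
            have : (0:ℝ) ≤ (2:ℝ)^n := by positivity
            nlinarith
  have h4 : (0:ℝ) ≤ (2⁻¹:ℝ)^k := by positivity
  calc ((k:ℝ)+1)^p * (2⁻¹:ℝ)^k ≤ ((2:ℝ)^n * ((k:ℝ)^n + 1)) * (2⁻¹:ℝ)^k := by
        apply mul_le_mul_of_nonneg_right _ h4
        calc ((k:ℝ)+1)^p ≤ ((k:ℝ)+1)^(n:ℝ) := h1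
          _ = ((k:ℝ)+1)^n := h2
          _ ≤ (2:ℝ)^n * ((k:ℝ)^n + 1) := h3
    _ = (2:ℝ)^n * ((k:ℝ)^n * (2⁻¹:ℝ)^k) + (2:ℝ)^n * (2⁻¹:ℝ)^k := by ring

/-- The constant in the John–Nirenberg iteration. -/
def Kp (p : ℝ) : ℝ := 4 * ∑' k : ℕ, ((k:ℝ)+1)^p * (2⁻¹:ℝ)^k

lemma Kp_pos (p : ℝ) : 0 < Kp p := by
  unfold Kp
  have h : (0:ℝ) < ∑' k : ℕ, ((k:ℝ)+1)^p * (2⁻¹:ℝ)^k := by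
    apply Summable.tsum_pos (summable_rpow_geom p) (fun k => by positivity) 0
    norm_num
  linarith

lemma tree_Lp_bound {w f : ℝ → ℝ} (hw : IsWeight w) {p β : ℝ} (hp : 1 < p) {Ps : Set Bitile}
    (Hβ : WkHyp w f β Ps) (hβ : 0 < β) {T : Tree} (hTsub : (T.elems : Set Bitile) ⊆ Ps)
    (hT : T.TwoOverlapping) :
    eLpNorm (treeSq f T) (ENNReal.ofReal p) (wMeasure w) ≤
      ENNReal.ofReal (3 * (Kp p)^(1/p) * β) * (wMeasure w T.top.timeI)^(1/p) := by
  set μ := wMeasure w with hμ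
  set g := treeSq f T with hg
  have hg0 : ∀ x, 0 ≤ g x := fun x => treeSq_nonneg f T x
  have hgm : Measurable g := measurable_treeSq f T
  have hp0 : (0:ℝ) < p := lt_trans one_pos hp
  have hpn0 : ENNReal.ofReal p ≠ 0 := by
    simp only [ne_eq, ENNReal.ofReal_eq_zero, not_le]
    exact hp0
  rw [eLpNorm_eq_lintegral_rpow_enorm_toReal hpn0 ENNReal.ofReal_ne_top,
    ENNReal.toReal_ofReal hp0.le]
  have hnn : ∀ x, ((‖g x‖₊ : ℝ≥0∞)) = ENNReal.ofReal (g x) := fun x => by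
    rw [← enorm_eq_nnnorm, ← ofReal_norm, Real.norm_of_nonneg (hg0 x)]
  have hint : ∫⁻ x, ((‖g x‖₊ : ℝ≥0∞))^p ∂μ = ∫⁻ x, (ENNReal.ofReal (g x))^p ∂μ :=
    lintegral_congr (fun x => by rw [hnn x])
  simp only [enorm_eq_nnnorm]
  rw [hint]
  set D : ℕ → Set ℝ := fun k =>
    T.top.timeI ∩ {y | 3*β*(k:ℝ) ≤ g y ∧ g y < 3*β*((k:ℝ)+1)} with hD
  have hDmeas : ∀ k, MeasurableSet (D k) := by
    intro k
    apply (measurableSet_bitile_timeI T.top).inter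
    exact (measurableSet_le measurable_const hgm).inter (measurableSet_lt hgm measurable_const)
  set c : ℕ → ℝ≥0∞ := fun k => (ENNReal.ofReal (3*β*((k:ℝ)+1)))^p with hc
  have hpt : ∀ x, (ENNReal.ofReal (g x))^p ≤
      ∑' k : ℕ, Set.indicator (D k) (fun _ => c k) x := by
    intro x
    rcases eq_or_lt_of_le (hg0 x) with h0 | h0
    · rw [← h0]
      simp only [ENNReal.ofReal_zero]
      rw [ENNReal.zero_rpow_of_pos hp0]
      exact zero_le
    · have h3β : (0:ℝ) < 3*β := by linarith
      set k := ⌊g x / (3*β)⌋₊ with hk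
      have hfl : (k:ℝ) ≤ g x / (3*β) := Nat.floor_le (by positivity)
      have hfl2 : g x / (3*β) < (k:ℝ)+1 := Nat.lt_floor_add_one _
      have hb1 : 3*β*(k:ℝ) ≤ g x := by
        calc 3*β*(k:ℝ) ≤ 3*β*(g x/(3*β)) := by nlinarith
          _ = g x := by field_simp
      have hb2 : g x < 3*β*((k:ℝ)+1) := by
        calc g x = 3*β*(g x/(3*β)) := by field_simp
          _ < 3*β*((k:ℝ)+1) := by nlinarith
      have hxtop : x ∈ T.top.timeI := by
        by_contra hc'
        rw [hg] at h0
        rw [treeSq_support hc'] at h0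
        exact lt_irrefl _ h0
      have hxD : x ∈ D k := ⟨hxtop, hb1, hb2⟩
      calc (ENNReal.ofReal (g x))^p ≤ c k :=
            ENNReal.rpow_le_rpow (ENNReal.ofReal_le_ofReal hb2.le) hp0.le
        _ = Set.indicator (D k) (fun _ => c k) x := by rw [Set.indicator_of_mem hxD]
        _ ≤ ∑' k : ℕ, Set.indicator (D k) (fun _ => c k) x :=
            ENNReal.le_tsum k
  have hIle : ∫⁻ x, (ENNReal.ofReal (g x))^p ∂μ ≤ ∑' k : ℕ, c k * μ (D k) := by
    calc ∫⁻ x, (ENNReal.ofReal (g x))^p ∂μ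
        ≤ ∫⁻ x, ∑' k : ℕ, Set.indicator (D k) (fun _ => c k) x ∂μ := lintegral_mono hpt
      _ = ∑' k : ℕ, ∫⁻ x, Set.indicator (D k) (fun _ => c k) x ∂μ :=
          lintegral_tsum (fun k => (measurable_const.indicator (hDmeas k)).aemeasurable)
      _ = ∑' k : ℕ, c k * μ (D k) := by
          apply tsum_congr
          intro k
          rw [lintegral_indicator (hDmeas k), setLIntegral_const]
  have hμtop_lt : μ T.top.timeI < ⊤ := by
    rw [hμ, Bitile.timeI_eq]; exact wMeasure_dyadicI_lt_top hw _ _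
  have hDb : ∀ k : ℕ, μ (D k) ≤ 4 * (μ T.top.timeI * (2⁻¹:ℝ≥0∞)^k) := by
    intro k
    match k with
    | 0 =>
      calc μ (D 0) ≤ μ T.top.timeI := measure_mono Set.inter_subset_left
        _ ≤ 4 * (μ T.top.timeI * (2⁻¹:ℝ≥0∞)^(0:ℕ)) := by
            rw [pow_zero, mul_one]
            exact le_mul_of_one_le_left' (by norm_num)
    | 1 =>
      calc μ (D 1) ≤ μ T.top.timeI := measure_mono Set.inter_subset_left
        _ ≤ 4 * (μ T.top.timeI * (2⁻¹:ℝ≥0∞)^(1:ℕ)) := by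
            rw [pow_one]
            calc μ T.top.timeI = 1 * μ T.top.timeI := (one_mul _).symm
              _ ≤ (4 * 2⁻¹) * μ T.top.timeI := by
                  apply mul_le_mul_left
                  rw [show (4:ℝ≥0∞) = 2*2 by norm_num,
                    mul_assoc, ENNReal.mul_inv_cancel (by norm_num) (by norm_num), mul_one]
                  norm_num
              _ = 4 * (μ T.top.timeI * 2⁻¹) := by ring
    | (k'+2) =>
      have hsub : D (k'+2) ⊆ {y | 3*β*((k':ℝ)+1) < g y} := by
        rintro y ⟨hy1, hy2, hy3⟩
        rw [Set.mem_setOf_eq]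
        have : ((k'+2:ℕ):ℝ) = (k':ℝ)+2 := by push_cast; ring
        rw [this] at hy2
        nlinarith
      have hiter := iter_bound hw Hβ hβ hTsub hT k'
      have h4 : (4:ℝ≥0∞) * (2⁻¹:ℝ≥0∞)^2 = 1 := by
        rw [← ENNReal.inv_pow, show ((2:ℝ≥0∞)^2) = 4 by norm_num]
        exact ENNReal.mul_inv_cancel (by norm_num) (by norm_num)
      calc μ (D (k'+2)) ≤ μ {y | 3*β*((k':ℝ)+1) < g y} := measure_mono hsub
        _ ≤ μ T.top.timeI * (2⁻¹:ℝ≥0∞)^k' := hiter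
        _ = μ T.top.timeI * (2⁻¹:ℝ≥0∞)^k' * (4 * (2⁻¹:ℝ≥0∞)^2) := by rw [h4, mul_one]
        _ = 4 * (μ T.top.timeI * (2⁻¹:ℝ≥0∞)^(k'+2)) := by rw [pow_add]; ring
  have hsum2 : ∑' k : ℕ, c k * μ (D k) ≤
      ENNReal.ofReal ((3*β)^p * Kp p) * μ T.top.timeI := by
    calc ∑' k : ℕ, c k * μ (D k)
        ≤ ∑' k : ℕ, (c k * 4 * (2⁻¹:ℝ≥0∞)^k) * μ T.top.timeI := by
          apply ENNReal.tsum_le_tsum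
          intro k
          calc c k * μ (D k) ≤ c k * (4 * (μ T.top.timeI * (2⁻¹:ℝ≥0∞)^k)) :=
                mul_le_mul_right (hDb k) _
            _ = (c k * 4 * (2⁻¹:ℝ≥0∞)^k) * μ T.top.timeI := by ring
      _ = (∑' k : ℕ, (c k * 4 * (2⁻¹:ℝ≥0∞)^k)) * μ T.top.timeI := ENNReal.tsum_mul_right
      _ = ENNReal.ofReal ((3*β)^p * Kp p) * μ T.top.timeI := by
          congr 1
          have hterm : ∀ k : ℕ, c k * 4 * (2⁻¹:ℝ≥0∞)^k =
              ENNReal.ofReal (((3*β)^p * 4) * (((k:ℝ)+1)^p * (2⁻¹:ℝ)^k)) := by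
            intro k
            have hk0 : (0:ℝ) ≤ 3*β*((k:ℝ)+1) := by
              have := Nat.cast_nonneg (α := ℝ) k
              nlinarith
            have hck : c k = ENNReal.ofReal ((3*β*((k:ℝ)+1))^p) :=
              ENNReal.ofReal_rpow_of_nonneg hk0 hp0.le
            have hinv : (2⁻¹:ℝ≥0∞) = ENNReal.ofReal (2⁻¹:ℝ) := by
              rw [ENNReal.ofReal_inv_of_pos (by norm_num)]
              norm_num
            have h2k : (2⁻¹:ℝ≥0∞)^k = ENNReal.ofReal ((2⁻¹:ℝ)^k) := by
              rw [hinv, ← ENNReal.ofReal_pow (by norm_num)]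
            have h4' : (4:ℝ≥0∞) = ENNReal.ofReal (4:ℝ) := by norm_num
            rw [hck, h4', h2k, ← ENNReal.ofReal_mul (Real.rpow_nonneg hk0 p),
              ← ENNReal.ofReal_mul (mul_nonneg (Real.rpow_nonneg hk0 p) (by norm_num))]
            congr 1
            rw [Real.mul_rpow (by linarith : (0:ℝ) ≤ 3*β) (by positivity : (0:ℝ) ≤ (k:ℝ)+1)]
            ring
          rw [tsum_congr hterm]
          have h3b : (0:ℝ) ≤ (3*β)^p := Real.rpow_nonneg (by linarith) p
          rw [← ENNReal.ofReal_tsum_of_nonneg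
            (fun k => mul_nonneg (mul_nonneg h3b (by norm_num))
              (mul_nonneg (Real.rpow_nonneg (by positivity) p) (by positivity)))
            (((summable_rpow_geom p).mul_left _))]
          congr 1
          rw [tsum_mul_left]
          rw [Kp]
          ring
  have hfinal : ∫⁻ x, (ENNReal.ofReal (g x))^p ∂μ ≤
      ENNReal.ofReal ((3*β)^p * Kp p) * μ T.top.timeI := le_trans hIle hsum2
  calc (∫⁻ x, (ENNReal.ofReal (g x))^p ∂μ)^(1/p)
      ≤ (ENNReal.ofReal ((3*β)^p * Kp p) * μ T.top.timeI)^(1/p) :=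
        ENNReal.rpow_le_rpow hfinal (by positivity)
    _ = ENNReal.ofReal (3 * (Kp p)^(1/p) * β) * (μ T.top.timeI)^(1/p) := by
        rw [ENNReal.mul_rpow_of_nonneg _ _ (by positivity : (0:ℝ) ≤ 1/p)]
        congr 1
        rw [ENNReal.ofReal_rpow_of_nonneg
          (mul_nonneg (Real.rpow_nonneg (by linarith) p) (Kp_pos p).le)
          (one_div_nonneg.mpr hp0.le)]
        congr 1
        rw [Real.mul_rpow (Real.rpow_nonneg (by linarith) p) (Kp_pos p).le]
        have hbb : (((3*β)^p)^(1/p) : ℝ) = 3*β := by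
          rw [← Real.rpow_mul (by linarith : (0:ℝ) ≤ 3*β)]
          rw [mul_one_div_cancel hp0.ne']
          exact Real.rpow_one _
        rw [hbb]
        ring

lemma cheb_tree {w f : ℝ → ℝ} (hw : IsWeight w) {p : ℝ} (hp : 1 < p) (T : Tree) :
    wkNorm (treeSq f T) (wMeasure w) / wMeasure w T.top.timeI ≤
      eLpNorm (treeSq f T) (ENNReal.ofReal p) (wMeasure w) /
        (wMeasure w T.top.timeI)^(1/p) := by
  set μ := wMeasure w with hμ
  set g := treeSq f T with hg
  have hg0 : ∀ x, 0 ≤ g x := fun x => treeSq_nonneg f T x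
  have hgm : Measurable g := measurable_treeSq f T
  have hp0 : (0:ℝ) < p := lt_trans one_pos hp
  have hpn0 : ENNReal.ofReal p ≠ 0 := by
    simp only [ne_eq, ENNReal.ofReal_eq_zero, not_le]; exact hp0
  set N := eLpNorm g (ENNReal.ofReal p) μ with hN
  set μt := μ T.top.timeI with hμt
  have hμtpos : 0 < μt := by rw [hμt, hμ, Bitile.timeI_eq]; exact wMeasure_dyadicI_pos hw _ _
  have hμtlt : μt < ⊤ := by rw [hμt, hμ, Bitile.timeI_eq]; exact wMeasure_dyadicI_lt_top hw _ _
  have hNp : N ^ p = ∫⁻ x, ((‖g x‖₊ : ℝ≥0∞))^p ∂μ := by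
    rw [hN, eLpNorm_eq_lintegral_rpow_enorm_toReal hpn0 ENNReal.ofReal_ne_top,
      ENNReal.toReal_ofReal hp0.le, ← ENNReal.rpow_mul,
      one_div_mul_cancel hp0.ne', ENNReal.rpow_one]; rfl
  have hexp1 : (0:ℝ) ≤ 1 - 1/p := by
    have : 1/p ≤ 1 := by rw [div_le_one hp0]; linarith
    linarith
  -- Step A
  have hstepA : wkNorm g μ ≤ N * μt^(1-1/p) := by
    apply iSup_le
    intro lam
    rcases le_or_gt lam 0 with hlam | hlam
    · rw [ENNReal.ofReal_eq_zero.mpr hlam, zero_mul]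
      exact zero_le
    · set s := {x | lam < |g x|} with hs
      have hsmeas : MeasurableSet s := measurableSet_lt measurable_const hgm.abs
      have hssub : s ⊆ T.top.timeI := by
        intro x hx
        rw [hs, Set.mem_setOf_eq, abs_of_nonneg (hg0 x)] at hx
        by_contra hc
        rw [hg] at hx
        rw [treeSq_support hc] at hx
        linarith
      have hμs_le : μ s ≤ μt := measure_mono hssub
      have hμs_lt : μ s < ⊤ := lt_of_le_of_lt hμs_le hμtlt
      have hcheb : (ENNReal.ofReal lam)^p * μ s ≤ N ^ p := by
        rw [hNp]
        calc (ENNReal.ofReal lam)^p * μ s = ∫⁻ _ in s, (ENNReal.ofReal lam)^p ∂μ :=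
              (setLIntegral_const s _).symm
          _ ≤ ∫⁻ x in s, ((‖g x‖₊ : ℝ≥0∞))^p ∂μ := by
              apply setLIntegral_mono (ENNReal.continuous_rpow_const.measurable.comp hgm.nnnorm.coe_nnreal_ennreal)
              intro x hx
              apply ENNReal.rpow_le_rpow _ hp0.le
              show ENNReal.ofReal lam ≤ (‖g x‖₊ : ℝ≥0∞)
              rw [← enorm_eq_nnnorm, ← ofReal_norm, Real.norm_eq_abs]
              exact ENNReal.ofReal_le_ofReal (le_of_lt hx)
          _ ≤ ∫⁻ x, ((‖g x‖₊ : ℝ≥0∞))^p ∂μ := setLIntegral_le_lintegral s _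
      rcases eq_or_ne (μ s) 0 with hμs0 | hμs0
      · rw [hμs0, mul_zero]
        exact zero_le
      · have hA1 : ENNReal.ofReal lam * (μ s)^(1/p) ≤ N := by
          have := ENNReal.rpow_le_rpow hcheb (by positivity : (0:ℝ) ≤ 1/p)
          rw [ENNReal.mul_rpow_of_nonneg _ _ (by positivity : (0:ℝ) ≤ 1/p),
            ← ENNReal.rpow_mul, mul_one_div_cancel hp0.ne', ENNReal.rpow_one,
            ← ENNReal.rpow_mul, mul_one_div_cancel hp0.ne', ENNReal.rpow_one] at this
          exact this
        have hsplit : (ENNReal.ofReal lam * (μ s)^(1/p)) * (μ s)^(1-1/p)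
            = ENNReal.ofReal lam * μ s := by
          rw [mul_assoc, ← ENNReal.rpow_add _ _ hμs0 hμs_lt.ne]
          norm_num
        calc ENNReal.ofReal lam * μ s
            = (ENNReal.ofReal lam * (μ s)^(1/p)) * (μ s)^(1-1/p) := hsplit.symm
          _ ≤ N * μt^(1-1/p) := by
              apply mul_le_mul' hA1
              exact ENNReal.rpow_le_rpow hμs_le hexp1
  -- Step B
  have hkey : μt^(1-1/p) * μt⁻¹ = (μt^(1/p))⁻¹ := by
    rw [← ENNReal.rpow_neg_one, ← ENNReal.rpow_add _ _ hμtpos.ne' hμtlt.ne,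
      show (1-1/p) + (-1) = -(1/p) by ring, ENNReal.rpow_neg]
  have hfin : (N * μt^(1-1/p)) / μt = N / μt^(1/p) := by
    set e1 : ℝ := 1 - 1/p with he1
    set e2 : ℝ := 1/p with he2
    rw [div_eq_mul_inv, div_eq_mul_inv, mul_assoc, hkey]
  calc wkNorm g μ / μt ≤ (N * μt^(1-1/p)) / μt := ENNReal.div_le_div_right hstepA μt
    _ = N / μt^(1/p) := hfin

/-- Lemma 4.2, BMO characterization of size: the quantities
`sup_T w(I_T)^{-1/p} ‖S_T f‖_{L^p(w)}` and `sup_T w(I_T)^{-1} ‖S_T f‖_{L^{1,∞}(w)}`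
over 2-overlapping trees `T ⊆ Ps` are comparable with constants depending only on `p`. -/
theorem size_BMO_characterization (p : ℝ) (hp : 1 < p) :
    ∃ c C : ℝ, 0 < c ∧ 0 < C ∧
    ∀ w : ℝ → ℝ, IsWeight w → ∀ f : ℝ → ℝ, ∀ Ps : Set Bitile,
      (ENNReal.ofReal c *
        (⨆ (T : Tree) (_ : (T.elems : Set Bitile) ⊆ Ps ∧ T.TwoOverlapping),
          wkNorm (treeSq f T) (wMeasure w) / wMeasure w T.top.timeI) ≤
        ⨆ (T : Tree) (_ : (T.elems : Set Bitile) ⊆ Ps ∧ T.TwoOverlapping),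
          eLpNorm (treeSq f T) (ENNReal.ofReal p) (wMeasure w) /
            (wMeasure w T.top.timeI) ^ (1/p)) ∧
      ((⨆ (T : Tree) (_ : (T.elems : Set Bitile) ⊆ Ps ∧ T.TwoOverlapping),
          eLpNorm (treeSq f T) (ENNReal.ofReal p) (wMeasure w) /
            (wMeasure w T.top.timeI) ^ (1/p)) ≤
        ENNReal.ofReal C *
        ⨆ (T : Tree) (_ : (T.elems : Set Bitile) ⊆ Ps ∧ T.TwoOverlapping),
          wkNorm (treeSq f T) (wMeasure w) / wMeasure w T.top.timeI) := by
  have hp0 : (0:ℝ) < p := lt_trans one_pos hp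
  have hCpos : (0:ℝ) < 3 * (Kp p)^(1/p) := by
    have := Real.rpow_pos_of_pos (Kp_pos p) (1/p)
    linarith
  refine ⟨1, 3 * (Kp p)^(1/p), one_pos, hCpos, ?_⟩
  intro w hw f Ps
  constructor
  · rw [ENNReal.ofReal_one, one_mul]
    apply iSup_le
    intro T
    apply iSup_le
    intro hT
    exact le_trans (cheb_tree hw hp T)
      (le_iSup₂ (f := fun (T : Tree) (_ : (T.elems : Set Bitile) ⊆ Ps ∧ T.TwoOverlapping) =>
        eLpNorm (treeSq f T) (ENNReal.ofReal p) (wMeasure w) /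
          (wMeasure w T.top.timeI) ^ (1/p)) T hT)
  · set B := ⨆ (T : Tree) (_ : (T.elems : Set Bitile) ⊆ Ps ∧ T.TwoOverlapping),
      wkNorm (treeSq f T) (wMeasure w) / wMeasure w T.top.timeI with hB
    apply iSup_le
    intro T
    apply iSup_le
    intro hT
    have hμpos : 0 < wMeasure w T.top.timeI := by
      rw [Bitile.timeI_eq]; exact wMeasure_dyadicI_pos hw _ _
    have hμlt : wMeasure w T.top.timeI < ⊤ := by
      rw [Bitile.timeI_eq]; exact wMeasure_dyadicI_lt_top hw _ _
    have hμp0 : (wMeasure w T.top.timeI)^(1/p) ≠ 0 := (ENNReal.rpow_pos hμpos hμlt.ne).ne'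
    have hμpt : (wMeasure w T.top.timeI)^(1/p) ≠ ⊤ :=
      ENNReal.rpow_ne_top_of_nonneg (by positivity) hμlt.ne
    rcases eq_top_or_lt_top B with hBtop | hBlt
    · rw [hBtop, ENNReal.mul_top (ENNReal.ofReal_pos.mpr hCpos).ne']
      exact le_top
    · set β := B.toReal with hβdef
      have hBeq : ENNReal.ofReal β = B := ENNReal.ofReal_toReal hBlt.ne
      have Hβ : WkHyp w f β Ps := by
        intro T' hsub hover
        have hμ'pos : 0 < wMeasure w T'.top.timeI := by
          rw [Bitile.timeI_eq]; exact wMeasure_dyadicI_pos hw _ _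
        have hμ'lt : wMeasure w T'.top.timeI < ⊤ := by
          rw [Bitile.timeI_eq]; exact wMeasure_dyadicI_lt_top hw _ _
        have h1 : wkNorm (treeSq f T') (wMeasure w) / wMeasure w T'.top.timeI ≤ B := by
          rw [hB]
          exact le_iSup₂ (f := fun (T : Tree) (_ : (T.elems : Set Bitile) ⊆ Ps ∧
            T.TwoOverlapping) => wkNorm (treeSq f T) (wMeasure w) / wMeasure w T.top.timeI)
            T' ⟨hsub, hover⟩
        rw [← hBeq] at h1
        exact (ENNReal.div_le_iff_le_mul (Or.inl hμ'pos.ne') (Or.inl hμ'lt.ne)).mp h1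
      rcases le_or_gt β 0 with hβ0 | hβpos
      · have hβ0' : β = 0 := le_antisymm hβ0 ENNReal.toReal_nonneg
        have hwk0 : wkNorm (treeSq f T) (wMeasure w) = 0 := by
          have h2 := Hβ T hT.1 hT.2
          rw [hβ0'] at h2
          simpa using h2
        have hg0ae : treeSq f T =ᵐ[wMeasure w] (0 : ℝ → ℝ) := by
          rw [Filter.EventuallyEq, ae_iff]
          have hsub2 : {x | ¬ treeSq f T x = (0 : ℝ → ℝ) x} ⊆
              ⋃ n : ℕ, {x | 1/((n:ℝ)+1) < |treeSq f T x|} := by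
            intro x hx
            simp only [Set.mem_setOf_eq, Pi.zero_apply] at hx
            have hpos : 0 < treeSq f T x := lt_of_le_of_ne (treeSq_nonneg f T x) (Ne.symm hx)
            obtain ⟨n, hn⟩ := exists_nat_one_div_lt hpos
            apply Set.mem_iUnion.mpr
            exact ⟨n, by rw [Set.mem_setOf_eq, abs_of_nonneg (treeSq_nonneg f T x)]; exact_mod_cast hn⟩
          apply measure_mono_null hsub2
          apply measure_iUnion_null
          intro n
          have h2 := le_wkNorm (treeSq f T) (wMeasure w) (1/((n:ℝ)+1))
          rw [hwk0] at h2
          have h3 := le_antisymm h2 zero_le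
          rcases mul_eq_zero.mp h3 with h4 | h4
          · exfalso
            rw [ENNReal.ofReal_eq_zero] at h4
            have : (0:ℝ) < 1/((n:ℝ)+1) := by positivity
            linarith
          · exact h4
        rw [eLpNorm_congr_ae hg0ae, eLpNorm_zero, ENNReal.zero_div]
        exact zero_le
      · have hbound := tree_Lp_bound hw hp Hβ hβpos hT.1 hT.2
        rw [ENNReal.div_le_iff_le_mul (Or.inl hμp0) (Or.inl hμpt)]
        calc eLpNorm (treeSq f T) (ENNReal.ofReal p) (wMeasure w)
            ≤ ENNReal.ofReal (3 * (Kp p)^(1/p) * β) * (wMeasure w T.top.timeI)^(1/p) := hbound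
          _ = (ENNReal.ofReal (3 * (Kp p)^(1/p)) * B) * (wMeasure w T.top.timeI)^(1/p) := by
              rw [ENNReal.ofReal_mul hCpos.le, hBeq]
end Paper
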